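/- arXiv:1809.04250 — 10 statements merged into one kernel-verified Lean document; each statement's English description precedes it below -/
import Mathlib

section
/- Let A be a maximal monotone operator on a real Hilbert space H, β ∈ (0,1), z ∈ H, r > 0, and let (A_z)^{(β)}(x) = 2(1-β)·A((1/β)x + z) + ((1-β)/β)x. Then for any x ∈ H, the resolvent satisfies J_{r(A_z)^{(β)}}(x) = β·J_{(2r(1-β)/(β+r(1-β)))A}( x/(β+r(1-β)) + z ) − βz. -/
open scoped RealInnerProductSpace

variable {H : Type*} [NormedAddCommGroup H] [InnerProductSpace ℝ H] [CompleteSpace H]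

/-- A set-valued operator is monotone. -/
def MonotoneOp (A : H → Set H) : Prop :=
  ∀ ⦃x y x' y' : H⦄, x' ∈ A x → y' ∈ A y → 0 ≤ ⟪x - y, x' - y'⟫

/-- A set-valued operator is σ-strongly monotone. -/
def StronglyMonotoneOp (σ : ℝ) (A : H → Set H) : Prop :=
  ∀ ⦃x y x' y' : H⦄, x' ∈ A x → y' ∈ A y → σ * ‖x - y‖ ^ 2 ≤ ⟪x - y, x' - y'⟫

/-- A set-valued operator is maximal monotone. -/
def MaximalMonotoneOp (A : H → Set H) : Prop :=
  MonotoneOp A ∧ ∀ x x' : H, (∀ y y' : H, y' ∈ A y → 0 ≤ ⟪x - y, x' - y'⟫) → x' ∈ A x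

/-- The operator `(A_z)^{(β)} : x ↦ 2(1-β)·A((1/β)x + z) + ((1-β)/β)x`. -/
def pert (A : H → Set H) (z : H) (β : ℝ) : H → Set H :=
  fun x => (fun u => (2 * (1 - β)) • u + ((1 - β) / β) • x) '' A (β⁻¹ • x + z)

omit [CompleteSpace H] in
lemma pert_monotone (A : H → Set H) (hA : MonotoneOp A) (z : H) (β : ℝ)
    (hβ : β ∈ Set.Ioo (0:ℝ) 1) : MonotoneOp (pert A z β) := by
  obtain ⟨hβ0, hβ1⟩ := hβ
  rintro x y x' y' ⟨a, ha, rfl⟩ ⟨b, hb, rfl⟩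
  have key : 0 ≤ ⟪(β⁻¹ • x + z) - (β⁻¹ • y + z), a - b⟫ := hA ha hb
  have hβinner : ⟪(β⁻¹ • x + z) - (β⁻¹ • y + z), a - b⟫ = β⁻¹ * ⟪x - y, a - b⟫ := by
    rw [show (β⁻¹ • x + z) - (β⁻¹ • y + z) = β⁻¹ • (x - y) by module]
    exact real_inner_smul_left _ _ _
  have h1 : 0 ≤ ⟪x - y, a - b⟫ := by
    rw [hβinner] at key
    nlinarith [inv_pos.mpr hβ0]
  have expand : ((2 * (1 - β)) • a + ((1 - β) / β) • x) - ((2 * (1 - β)) • b + ((1 - β) / β) • y)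
      = (2 * (1 - β)) • (a - b) + ((1 - β) / β) • (x - y) := by module
  rw [expand, inner_add_right, real_inner_smul_right, real_inner_smul_right,
    real_inner_self_eq_norm_sq]
  have h2 : 0 ≤ (1 - β) / β := div_nonneg (by linarith) hβ0.le
  nlinarith [sq_nonneg ‖x - y‖]

theorem stmt3 (A : H → Set H) (hA : MaximalMonotoneOp A) (z : H) (β r : ℝ)
    (hβ : β ∈ Set.Ioo (0:ℝ) 1) (hr : 0 < r) (JA Jz : H → H)
    (hJA : ∀ w : H, ∃ m ∈ A (JA w), w = JA w + (2 * r * (1 - β) / (β + r * (1 - β))) • m)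
    (hJz : ∀ w : H, ∃ m ∈ pert A z β (Jz w), w = Jz w + r • m) (x : H) :
    Jz x = β • JA ((β + r * (1 - β))⁻¹ • x + z) - β • z := by
  obtain ⟨hβ0, hβ1⟩ := hβ
  have hc0 : 0 < β + r * (1 - β) := by nlinarith
  obtain ⟨m, hm, hmeq⟩ := hJA ((β + r * (1 - β))⁻¹ • x + z)
  set w : H := (β + r * (1 - β))⁻¹ • x + z with hw
  set y : H := β • JA w - β • z with hy
  have hyz : β⁻¹ • y + z = JA w := by
    rw [hy, smul_sub, smul_smul, smul_smul, inv_mul_cancel₀ hβ0.ne', one_smul, one_smul]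
    abel
  have hp : (2 * (1 - β)) • m + ((1 - β) / β) • y ∈ pert A z β y :=
    ⟨m, by rw [hyz]; exact hm, rfl⟩
  have hJAw : JA w = w - (2 * r * (1 - β) / (β + r * (1 - β))) • m :=
    eq_sub_of_add_eq hmeq.symm
  have hres : x = y + r • ((2 * (1 - β)) • m + ((1 - β) / β) • y) := by
    rw [hy, hJAw, hw]
    match_scalars <;> field_simp <;> ring
  obtain ⟨m', hm', hmeq'⟩ := hJz x
  have hmono := pert_monotone A hA.1 z β ⟨hβ0, hβ1⟩ hm' hp
  have hdiff : Jz x - y = (-r) • (m' - ((2 * (1 - β)) • m + ((1 - β) / β) • y)) := by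
    have h2 : Jz x + r • m' = y + r • ((2 * (1 - β)) • m + ((1 - β) / β) • y) := by
      rw [← hmeq', hres]
    have h3 : Jz x - y = r • ((2 * (1 - β)) • m + ((1 - β) / β) • y) - r • m' := by
      rw [eq_sub_iff_add_eq, sub_add_eq_add_sub, h2]; abel
    rw [h3]; module
  rw [hdiff, real_inner_smul_left, real_inner_self_eq_norm_sq] at hmono
  have hzero : m' - ((2 * (1 - β)) • m + ((1 - β) / β) • y) = 0 := by
    have h1 : r * ‖m' - ((2 * (1 - β)) • m + ((1 - β) / β) • y)‖ ^ 2 ≤ r * 0 := by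
      rw [mul_zero]; linarith
    have h2 : ‖m' - ((2 * (1 - β)) • m + ((1 - β) / β) • y)‖ ^ 2 ≤ 0 :=
      (mul_le_mul_iff_right₀ hr).mp h1
    have h3 : ‖m' - ((2 * (1 - β)) • m + ((1 - β) / β) • y)‖ = 0 := by
      nlinarith [norm_nonneg (m' - ((2 * (1 - β)) • m + ((1 - β) / β) • y))]
    rwa [norm_eq_zero] at h3
  have : Jz x = y := by
    have := hdiff
    rw [hzero, smul_zero] at this
    exact sub_eq_zero.mp this
  rw [this, hy]
end

section
/- Let A and B be monotone operators on a real Hilbert space H and r > 0. Then the zero set of A + B equals the image under J_{rA} of the fixed point set of the composition (2J_{rB} − I) ∘ (2J_{rA} − I), i.e., (A+B)^{-1}(0) = J_{rA}( Fix((2J_{rB} − I) ∘ (2J_{rA} − I)) ). -/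
open scoped RealInnerProductSpace

variable {H : Type*} [NormedAddCommGroup H] [InnerProductSpace ℝ H] [CompleteSpace H]

lemma res_unique {A : H → Set H} (hA : MonotoneOp A) {r : ℝ} (hr : 0 < r)
    {u v a m : H} (ha : a ∈ A u) (hm : m ∈ A v) (h : u + r • a = v + r • m) :
    u = v ∧ a = m := by
  have hu : u = v + r • m - r • a := eq_sub_of_add_eq h
  have huv : u - v = r • (m - a) := by rw [hu, smul_sub]; abel
  have h1 := hA ha hm
  rw [huv, real_inner_smul_left] at h1
  have h2 : ⟪m - a, a - m⟫ = -‖m - a‖ ^ 2 := by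
    rw [show a - m = -(m - a) by abel, inner_neg_right, real_inner_self_eq_norm_sq]
  rw [h2] at h1
  have h4 : 0 ≤ -‖m - a‖ ^ 2 := by
    by_contra hc; push_neg at hc; nlinarith
  have h5 : ‖m - a‖ ^ 2 = 0 := le_antisymm (by linarith) (sq_nonneg _)
  have h3 : ‖m - a‖ = 0 := by
    have := pow_eq_zero_iff (n := 2) (by norm_num) |>.mp h5
    exact this
  have ham : a = m := by
    have := norm_eq_zero.mp h3
    have := sub_eq_zero.mp this
    exact this.symm
  refine ⟨?_, ham⟩
  have : u - v = 0 := by rw [huv, ham, sub_self, smul_zero]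
  exact sub_eq_zero.mp this

theorem stmt4 (A B : H → Set H) (hA : MonotoneOp A) (hB : MonotoneOp B) (r : ℝ) (hr : 0 < r)
    (JA JB : H → H)
    (hJA : ∀ w : H, ∃ m ∈ A (JA w), w = JA w + r • m)
    (hJB : ∀ w : H, ∃ m ∈ B (JB w), w = JB w + r • m) :
    {u : H | ∃ a ∈ A u, ∃ b ∈ B u, a + b = 0} =
      JA '' {x : H | (2:ℝ) • JB ((2:ℝ) • JA x - x) - ((2:ℝ) • JA x - x) = x} := by
  ext u
  constructor
  · rintro ⟨a, ha, b, hb, hab⟩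
    set x := u + r • a with hxdef
    obtain ⟨m, hm, hxm⟩ := hJA x
    obtain ⟨huJA, ham⟩ := res_unique hA hr ha hm (hxdef ▸ hxm)
    have hba : b = -a := by
      have : b = 0 - a := by rw [← hab]; abel
      simpa using this
    have hy : (2:ℝ) • JA x - x = u + r • b := by
      rw [← huJA, hxdef, hba, smul_neg]
      module
    obtain ⟨n, hn, hyn⟩ := hJB (u + r • b)
    obtain ⟨huJB, hbn⟩ := res_unique hB hr hb hn hyn
    refine ⟨x, ?_, huJA.symm⟩
    show (2:ℝ) • JB ((2:ℝ) • JA x - x) - ((2:ℝ) • JA x - x) = x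
    rw [hy, ← huJB, hxdef, hba, smul_neg]
    module
  · rintro ⟨x, hx, rfl⟩
    obtain ⟨m, hm, hxm⟩ := hJA x
    set w := JA x with hw
    set y := (2:ℝ) • w - x with hydef
    obtain ⟨n, hn, hyn⟩ := hJB y
    have hxy : x + y = (2:ℝ) • w := by rw [hydef]; module
    have hJBy : JB y = w := by
      have h2 : (2:ℝ) • JB y = (2:ℝ) • w := by
        have : (2:ℝ) • JB y - y = x := hx
        have h3 : (2:ℝ) • JB y = x + y := by rw [← this]; abel
        rw [h3, hxy]
      exact smul_right_injective H (by norm_num : (2:ℝ) ≠ 0) h2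
    have hyw : y = w + r • (-m) := by
      rw [hydef, hxm, smul_neg]; module
    have hnm : n = -m := by
      have h4 : w + r • n = w + r • (-m) := by
        rw [← hyw]
        rw [hJBy] at hyn
        exact hyn.symm
      have h5 : r • n = r • (-m) := by
        have := add_left_cancel h4
        exact this
      exact smul_right_injective H (ne_of_gt hr) h5
    refine ⟨m, hm, n, ?_, ?_⟩
    · rw [← hJBy]; exact hn
    · rw [hnm]; abel
end

section
/- Let A, B be maximal monotone operators on a real Hilbert space H, z ∈ H, β ∈ (0,1), r > 0, and T := (2J_{r(B_z)^{(β)}} − I) ∘ (2J_{r(A_z)^{(β)}} − I). Then Fix(T) ≠ ∅ if and only if the solution set S = {u ∈ H : z ∈ (I + A + B)(u)} is nonempty. -/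
open scoped RealInnerProductSpace

variable {H : Type*} [NormedAddCommGroup H] [InnerProductSpace ℝ H] [CompleteSpace H]

lemma pert_mono {A : H → Set H} (hA : MonotoneOp A) {z : H} {β : ℝ}
    (hβ0 : 0 < β) (hβ1 : β < 1) : MonotoneOp (pert A z β) := by
  rintro x y x' y' ⟨a, ha, rfl⟩ ⟨b, hb, rfl⟩
  have key : 0 ≤ ⟪x - y, a - b⟫ := by
    have h := hA ha hb
    have harg : (β⁻¹ • x + z) - (β⁻¹ • y + z) = β⁻¹ • (x - y) := by module
    rw [harg, real_inner_smul_left] at h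
    nlinarith [inv_pos.2 hβ0, mul_pos hβ0 (inv_pos.2 hβ0)]
  have hdiff : ((2 * (1 - β)) • a + ((1 - β) / β) • x) -
      ((2 * (1 - β)) • b + ((1 - β) / β) • y)
      = (2 * (1 - β)) • (a - b) + ((1 - β) / β) • (x - y) := by module
  rw [hdiff, inner_add_right, real_inner_smul_right, real_inner_smul_right,
    real_inner_self_eq_norm_sq]
  have h1 : (0:ℝ) ≤ 2 * (1 - β) := by linarith
  have h2 : (0:ℝ) ≤ (1 - β) / β := div_nonneg (by linarith) hβ0.le
  have := mul_nonneg h1 key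
  have := mul_nonneg h2 (sq_nonneg ‖x - y‖)
  linarith

lemma resolvent_unique {M : H → Set H} (hM : MonotoneOp M) {r : ℝ} (hr : 0 < r)
    {J : H → H} (hJ : ∀ w : H, ∃ m ∈ M (J w), w = J w + r • m)
    {x m : H} (hm : m ∈ M x) {w : H} (hw : w = x + r • m) : J w = x := by
  obtain ⟨m', hm', hw'⟩ := hJ w
  have hmono := hM hm' hm
  have hdiff : J w - x = r • (m - m') := by
    linear_combination (norm := module) hw - hw'
  have h4 : ‖J w - x‖ ^ 2 = r * ⟪J w - x, m - m'⟫ := by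
    rw [← real_inner_self_eq_norm_sq]
    nth_rewrite 2 [hdiff]
    rw [real_inner_smul_right]
  have h3 : ⟪J w - x, m - m'⟫ = -⟪J w - x, m' - m⟫ := by
    rw [← inner_neg_right, neg_sub]
  have h5 : ‖J w - x‖ ^ 2 ≤ 0 := by
    rw [h4, h3]; nlinarith
  have h6 : ‖J w - x‖ = 0 := by
    nlinarith [norm_nonneg (J w - x), sq_nonneg ‖J w - x‖]
  exact sub_eq_zero.mp (norm_eq_zero.mp h6)

theorem stmt5 (A B : H → Set H) (hA : MaximalMonotoneOp A) (hB : MaximalMonotoneOp B)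
    (z : H) (β r : ℝ) (hβ : β ∈ Set.Ioo (0:ℝ) 1) (hr : 0 < r) (JA JB : H → H)
    (hJA : ∀ w : H, ∃ m ∈ pert A z β (JA w), w = JA w + r • m)
    (hJB : ∀ w : H, ∃ m ∈ pert B z β (JB w), w = JB w + r • m) :
    {x : H | (2:ℝ) • JB ((2:ℝ) • JA x - x) - ((2:ℝ) • JA x - x) = x}.Nonempty ↔
      {u : H | ∃ a ∈ A u, ∃ b ∈ B u, z = u + a + b}.Nonempty := by
  obtain ⟨hβ0, hβ1⟩ := hβ
  constructor
  · rintro ⟨w, hw⟩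
    simp only [Set.mem_setOf_eq] at hw
    obtain ⟨m, hm, hwm⟩ := hJA w
    set x := JA w with hxdef
    set y := (2:ℝ) • x - w with hydef
    obtain ⟨m', hm', hym⟩ := hJB y
    have hJBy : JB y = x := by
      have h2 : (2:ℝ) • JB y = (2:ℝ) • x := by
        linear_combination (norm := module) hw + hydef
      exact smul_right_injective H (by norm_num : (2:ℝ) ≠ 0) h2
    rw [hJBy] at hym hm'
    have hm'eq : m' = -m := by
      have h : r • m' = r • (-m) := by
        linear_combination (norm := module) -hwm + hydef - hym
      exact smul_right_injective H hr.ne' h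
    obtain ⟨a, ha, hma⟩ := hm
    obtain ⟨b, hb, hmb⟩ := hm'
    rw [hm'eq] at hmb
    have hkey : (2 * (1 - β)) • (a + b + β⁻¹ • x) = 0 := by
      linear_combination (norm := module) hma + hmb
    have h0 : a + b + β⁻¹ • x = 0 := by
      rcases smul_eq_zero.mp hkey with h | h
      · exact absurd h (by nlinarith : (2 * (1 - β)) ≠ 0)
      · exact h
    refine ⟨β⁻¹ • x + z, a, ha, b, hb, ?_⟩
    linear_combination (norm := module) -h0
  · rintro ⟨u, a, ha, b, hb, hz⟩
    set x := β • (u - z) with hx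
    have hux : β⁻¹ • x + z = u := by
      rw [hx, smul_smul, inv_mul_cancel₀ hβ0.ne', one_smul, sub_add_cancel]
    have hscal : ((1 - β) / β) • x = (1 - β) • (u - z) := by
      rw [hx, smul_smul, div_mul_cancel₀ _ hβ0.ne']
    set m := (2 * (1 - β)) • a + ((1 - β) / β) • x with hmdef
    have hmA : m ∈ pert A z β x := ⟨a, by rw [hux]; exact ha, rfl⟩
    have hz0 : a + b + (u - z) = 0 := by rw [hz]; abel
    have hmB : -m ∈ pert B z β x := by
      refine ⟨b, by rw [hux]; exact hb, ?_⟩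
      show (2 * (1 - β)) • b + ((1 - β) / β) • x = -m
      rw [hmdef, hscal]
      linear_combination (norm := module) (2 * (1 - β)) • hz0
    have hJAw : JA (x + r • m) = x :=
      resolvent_unique (pert_mono hA.1 hβ0 hβ1) hr hJA hmA rfl
    have hJBw : JB (x + r • (-m)) = x :=
      resolvent_unique (pert_mono hB.1 hβ0 hβ1) hr hJB hmB rfl
    refine ⟨x + r • m, ?_⟩
    simp only [Set.mem_setOf_eq]
    rw [hJAw]
    have h1 : (2:ℝ) • x - (x + r • m) = x + r • (-m) := by module
    rw [h1, hJBw]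
    module
end

section
/- Let A, B be maximal monotone operators on a real Hilbert space H, z ∈ H, β ∈ (0,1), r > 0, and T := (2J_{r(B_z)^{(β)}} − I) ∘ (2J_{r(A_z)^{(β)}} − I). Then the following are equivalent: (i) there exists x ∈ H such that the orbit {T^k(x)}_{k∈ℕ} is bounded; (ii) the set S = {u ∈ H : z ∈ (I + A + B)(u)} is nonempty. -/
open scoped RealInnerProductSpace
open Filter

set_option linter.unusedSectionVars false

variable {H : Type*} [NormedAddCommGroup H] [InnerProductSpace ℝ H] [CompleteSpace H]

lemma mono_pert {A : H → Set H} (hA : MonotoneOp A) (z : H) {β : ℝ} (hβ0 : 0 < β) (hβ1 : β < 1) :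
    MonotoneOp (pert A z β) := by
  rintro x y x' y' ⟨a, ha, rfl⟩ ⟨b, hb, rfl⟩
  have hrepr : ((2*(1-β))•a + ((1-β)/β)•x) - ((2*(1-β))•b + ((1-β)/β)•y)
      = (2*(1-β))•(a-b) + ((1-β)/β)•(x-y) := by module
  rw [hrepr, inner_add_right, real_inner_smul_right, real_inner_smul_right,
    real_inner_self_eq_norm_sq]
  have hin : 0 ≤ ⟪x - y, a - b⟫ := by
    have hxy : x - y = β • ((β⁻¹•x + z) - (β⁻¹•y + z)) := by
      have h1 : β • ((β⁻¹•x + z) - (β⁻¹•y + z)) = (β * β⁻¹) • (x - y) := by module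
      rw [h1, mul_inv_cancel₀ hβ0.ne', one_smul]
    rw [hxy, real_inner_smul_left]
    exact mul_nonneg hβ0.le (hA ha hb)
  have h2 : (0:ℝ) ≤ 2*(1-β) := by linarith
  have h3 : (0:ℝ) ≤ (1-β)/β := div_nonneg (by linarith) hβ0.le
  have := mul_nonneg h3 (sq_nonneg ‖x - y‖)
  nlinarith [mul_nonneg h2 hin]

lemma res_uniq {F : H → Set H} (hF : MonotoneOp F) {r : ℝ} (hr : 0 < r) {J : H → H}
    (hJ : ∀ w, ∃ m ∈ F (J w), w = J w + r • m) {w p mm : H}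
    (hm : mm ∈ F p) (hw : w = p + r • mm) : J w = p := by
  obtain ⟨m₀, hm₀, h₀⟩ := hJ w
  have h2 : p + r • mm = J w + r • m₀ := hw.symm.trans h₀
  have hdiff : J w - p = r • (mm - m₀) := by
    rw [smul_sub, sub_eq_sub_iff_add_eq_add, ← h2]; abel
  have hpos := hF hm₀ hm
  rw [hdiff, real_inner_smul_left] at hpos
  have hmm0 : ⟪mm - m₀, m₀ - mm⟫ = -‖mm - m₀‖^2 := by
    rw [show m₀ - mm = -(mm - m₀) by abel, inner_neg_right, real_inner_self_eq_norm_sq]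
  rw [hmm0] at hpos
  have hsq : ‖mm - m₀‖^2 ≤ 0 := by nlinarith
  have : mm - m₀ = 0 := by
    have := le_antisymm hsq (sq_nonneg _)
    rwa [pow_eq_zero_iff two_ne_zero, norm_eq_zero] at this
  rw [this, smul_zero] at hdiff
  exact sub_eq_zero.mp hdiff

lemma refl_nonexp {F : H → Set H} (hF : MonotoneOp F) {r : ℝ} (hr : 0 < r) {J : H → H}
    (hJ : ∀ w, ∃ m ∈ F (J w), w = J w + r • m) (w w' : H) :
    ‖((2:ℝ)•J w - w) - ((2:ℝ)•J w' - w')‖ ≤ ‖w - w'‖ := by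
  obtain ⟨m, hm, hwm⟩ := hJ w
  obtain ⟨m', hm', hwm'⟩ := hJ w'
  have hin : 0 ≤ ⟪J w - J w', m - m'⟫ := hF hm hm'
  have hm2 : r • m = w - J w := eq_sub_iff_add_eq.2 (by rw [add_comm]; exact hwm.symm)
  have hm2' : r • m' = w' - J w' := eq_sub_iff_add_eq.2 (by rw [add_comm]; exact hwm'.symm)
  have e1 : ((2:ℝ)•J w - w) - ((2:ℝ)•J w' - w') = (J w - J w') - r • (m - m') := by
    rw [smul_sub, hm2, hm2']; module
  have e2 : w - w' = (J w - J w') + r • (m - m') := by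
    rw [smul_sub, hm2, hm2']; module
  rw [e1, e2]
  have h1 := norm_sub_sq_real (J w - J w') (r • (m - m'))
  have h2 := norm_add_sq_real (J w - J w') (r • (m - m'))
  have h3 : ⟪J w - J w', r • (m - m')⟫ = r * ⟪J w - J w', m - m'⟫ := real_inner_smul_right _ _ _
  have h4 : 0 ≤ r * ⟪J w - J w', m - m'⟫ := mul_nonneg hr.le hin
  refine (pow_le_pow_iff_left₀ (norm_nonneg _) (norm_nonneg _) two_ne_zero).1 ?_
  nlinarith


lemma fixed_of_bounded {T : H → H} (hT : ∀ u v, ‖T u - T v‖ ≤ ‖u - v‖) {x : H} {M : ℝ}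
    (hM : ∀ k : ℕ, ‖T^[k] x‖ ≤ M) : ∃ c, T c = c := by
  set a : ℕ → H := fun k => T^[k] x with ha
  -- boundedness facts
  have hMk : ∀ (y : H) (k : ℕ), ‖a k - y‖^2 ≤ (M + ‖y‖)^2 := by
    intro y k
    have h1 : ‖a k - y‖ ≤ M + ‖y‖ := (norm_sub_le _ _).trans (add_le_add_left (hM k) _)
    exact pow_le_pow_left₀ (norm_nonneg _) h1 2
  have hb_above : ∀ y : H, IsBoundedUnder (· ≤ ·) atTop (fun k => ‖a k - y‖^2) :=
    fun y => isBoundedUnder_of ⟨(M + ‖y‖)^2, hMk y⟩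
  have hb_below : ∀ y : H, IsBoundedUnder (· ≥ ·) atTop (fun k => ‖a k - y‖^2) :=
    fun y => isBoundedUnder_of ⟨0, fun k => sq_nonneg _⟩
  have hb_cob : ∀ y : H, IsCoboundedUnder (· ≤ ·) atTop (fun k => ‖a k - y‖^2) :=
    fun y => (hb_below y).isCoboundedUnder_le
  set φ : H → ℝ := fun y => limsup (fun k => ‖a k - y‖^2) atTop with hφ
  have hφ_nonneg : ∀ y, 0 ≤ φ y := fun y =>
    le_limsup_of_frequently_le (Frequently.of_forall fun k => sq_nonneg _) (hb_above y)
  -- monotonicity of limsup with additive constant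
  have hmono : ∀ (y y' : H) (c : ℝ), (∀ k, ‖a k - y‖^2 ≤ ‖a k - y'‖^2 + c) → φ y ≤ φ y' + c := by
    intro y y' c h
    have h1 : φ y ≤ limsup (fun k => ‖a k - y'‖^2 + c) atTop :=
      limsup_le_limsup (Eventually.of_forall h) (hb_cob y)
        (isBoundedUnder_of ⟨(M + ‖y'‖)^2 + c, fun k => add_le_add_left (hMk y' k) c⟩)
    rwa [limsup_add_const atTop _ c (hb_above y') (hb_cob y')] at h1
  -- halving
  have hhalf : ∀ u : ℕ → ℝ, IsBoundedUnder (· ≤ ·) atTop u → IsCoboundedUnder (· ≤ ·) atTop u →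
      limsup (fun k => u k / 2) atTop = (limsup u atTop) / 2 := by
    intro u hb hc
    have hm2 : Monotone (fun s : ℝ => s / 2) := fun p q h => by dsimp; linarith
    have := hm2.map_limsup_of_continuousAt u (by fun_prop) hb hc
    exact this.symm
  -- midpoint inequality
  have hmid : ∀ y z : H, φ ((1/2 : ℝ) • (y + z)) ≤ φ y / 2 + φ z / 2 - ‖y - z‖^2/4 := by
    intro y z
    have hpt : ∀ k, ‖a k - (1/2:ℝ)•(y+z)‖^2
        = (‖a k - y‖^2/2 + ‖a k - z‖^2/2) + (-(‖y - z‖^2/4)) := by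
      intro k
      have hp := parallelogram_law_with_norm ℝ (a k - y) (a k - z)
      have e1 : (a k - y) + (a k - z) = (2:ℝ) • (a k - (1/2:ℝ)•(y+z)) := by module
      have e2 : (a k - y) - (a k - z) = -(y - z) := by abel
      rw [e1, e2, norm_neg, norm_smul] at hp
      simp only [Real.norm_ofNat] at hp
      nlinarith [hp]
    have heq : φ ((1/2:ℝ)•(y+z))
        = limsup (fun k => (‖a k - y‖^2/2 + ‖a k - z‖^2/2) + (-(‖y - z‖^2/4))) atTop :=
      limsup_congr (Eventually.of_forall hpt)
    have hbddS : IsBoundedUnder (· ≤ ·) atTop (fun k => ‖a k - y‖^2/2 + ‖a k - z‖^2/2) :=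
      isBoundedUnder_of ⟨(M + ‖y‖)^2/2 + (M + ‖z‖)^2/2,
        fun k => by have := hMk y k; have := hMk z k; linarith⟩
    have hcobS : IsCoboundedUnder (· ≤ ·) atTop (fun k => ‖a k - y‖^2/2 + ‖a k - z‖^2/2) :=
      (isBoundedUnder_of (f := atTop) ⟨0, fun k => by positivity⟩ :
        IsBoundedUnder (· ≥ ·) atTop _).isCoboundedUnder_le
    rw [heq, limsup_add_const atTop _ _ hbddS hcobS]
    have hadd : limsup (fun k => ‖a k - y‖^2/2 + ‖a k - z‖^2/2) atTop
        ≤ limsup (fun k => ‖a k - y‖^2/2) atTop + limsup (fun k => ‖a k - z‖^2/2) atTop := by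
      have hby : IsBoundedUnder (· ≥ ·) atTop (fun k => ‖a k - y‖^2/2) :=
        isBoundedUnder_of ⟨0, fun k => by positivity⟩
      have hby' : IsBoundedUnder (· ≤ ·) atTop (fun k => ‖a k - y‖^2/2) :=
        isBoundedUnder_of ⟨(M + ‖y‖)^2/2, fun k => by have := hMk y k; linarith⟩
      have hbz : IsCoboundedUnder (· ≤ ·) atTop (fun k => ‖a k - z‖^2/2) :=
        (isBoundedUnder_of (f := atTop) ⟨0, fun k => by positivity⟩ :
          IsBoundedUnder (· ≥ ·) atTop _).isCoboundedUnder_le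
      have hbz' : IsBoundedUnder (· ≤ ·) atTop (fun k => ‖a k - z‖^2/2) :=
        isBoundedUnder_of ⟨(M + ‖z‖)^2/2, fun k => by have := hMk z k; linarith⟩
      exact limsup_add_le hby hby' hbz hbz'
    rw [hhalf _ (hb_above y) (hb_cob y), hhalf _ (hb_above z) (hb_cob z)] at hadd
    linarith
  -- the shift inequality
  have hshift : ∀ y, φ (T y) ≤ φ y := by
    intro y
    have h1 : φ (T y) = limsup (fun k => ‖a (k+1) - T y‖^2) atTop :=
      (limsup_nat_add _ 1).symm
    rw [h1]
    refine limsup_le_limsup (Eventually.of_forall fun k => ?_)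
      ((isBoundedUnder_of (f := atTop) ⟨0, fun k => sq_nonneg _⟩ :
        IsBoundedUnder (· ≥ ·) atTop _).isCoboundedUnder_le) (hb_above y)
    have h2 : a (k+1) = T (a k) := Function.iterate_succ_apply' T k x
    dsimp only
    rw [h2]
    exact pow_le_pow_left₀ (norm_nonneg _) (hT _ _) 2
  -- minimizing sequence
  have hbdd_range : BddBelow (Set.range φ) := ⟨0, by rintro _ ⟨y, rfl⟩; exact hφ_nonneg y⟩
  set m := ⨅ y : H, φ y with hm
  have hm_le : ∀ y, m ≤ φ y := fun y => ciInf_le hbdd_range y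
  have hsel : ∀ n : ℕ, ∃ y, φ y < m + 1/(n+1) := by
    intro n
    apply exists_lt_of_ciInf_lt
    have : (0:ℝ) < 1/((n:ℝ)+1) := by positivity
    linarith
  choose y hy using hsel
  have hfrac : ∀ {N n : ℕ}, N ≤ n → 1/((n:ℝ)+1) ≤ 1/((N:ℝ)+1) := by
    intro N n hNn
    apply one_div_le_one_div_of_le (by positivity)
    exact_mod_cast Nat.succ_le_succ hNn
  have hyy : ∀ N n k : ℕ, N ≤ n → N ≤ k → ‖y n - y k‖^2 ≤ 4/((N:ℝ)+1) := by
    intro N n k hn hk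
    have h1 := hmid (y n) (y k)
    have h2 := hm_le ((1/2:ℝ) • (y n + y k))
    have h3 := hy n
    have h4 := hy k
    have h5 := hfrac hn
    have h6 := hfrac hk
    have h7 : (4:ℝ)/((N:ℝ)+1) = 2*(1/((N:ℝ)+1)) + 2*(1/((N:ℝ)+1)) := by ring
    rw [h7]
    linarith
  have hg1 : Tendsto (fun n : ℕ => 1/((n:ℝ)+1)) atTop (nhds 0) :=
    tendsto_one_div_add_atTop_nhds_zero_nat
  have hcauchy : CauchySeq y := by
    refine cauchySeq_of_le_tendsto_0 (fun N => Real.sqrt (4/((N:ℝ)+1))) ?_ ?_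
    · intro n k N hn hk
      rw [dist_eq_norm]
      have h1 := hyy N n k hn hk
      calc ‖y n - y k‖ = Real.sqrt (‖y n - y k‖^2) := (Real.sqrt_sq (norm_nonneg _)).symm
        _ ≤ Real.sqrt (4/((N:ℝ)+1)) := Real.sqrt_le_sqrt h1
    · have h4 : Tendsto (fun N : ℕ => 4/((N:ℝ)+1)) atTop (nhds 0) := by
        have := hg1.const_mul (4:ℝ)
        simp only [mul_zero] at this
        convert this using 2 with N
        ring
      have h5 := (Real.continuous_sqrt.tendsto 0).comp h4
      rw [Real.sqrt_zero] at h5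
      exact h5
  obtain ⟨c, hc⟩ := cauchySeq_tendsto_of_complete hcauchy
  have hnorm0 : Tendsto (fun n => ‖y n - c‖) atTop (nhds 0) :=
    tendsto_iff_norm_sub_tendsto_zero.mp hc
  have hφy_tendsto : Tendsto (fun n => φ (y n)) atTop (nhds m) := by
    have hup : Tendsto (fun n : ℕ => m + 1/((n:ℝ)+1)) atTop (nhds m) := by
      have := tendsto_const_nhds (x := m) (f := atTop (α := ℕ)) |>.add hg1
      simpa using this
    exact tendsto_of_tendsto_of_tendsto_of_le_of_le tendsto_const_nhds hup
      (fun n => hm_le (y n)) (fun n => (hy n).le)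
  have hφc_le : φ c ≤ m := by
    set L := 2*M + 2*‖c‖ + 3 with hL
    have hev : ∀ᶠ n in atTop, φ c ≤ φ (y n) + L * ‖y n - c‖ := by
      filter_upwards [hnorm0.eventually_le_const (one_pos)] with n hn1
      apply hmono c (y n) (L * ‖y n - c‖)
      intro k
      have h2 : ‖a k - c‖ ≤ ‖a k - y n‖ + ‖y n - c‖ := norm_sub_le_norm_sub_add_norm_sub _ _ _
      have hyn : ‖y n‖ ≤ ‖c‖ + 1 := by
        have := norm_sub_norm_le (y n) c
        linarith
      have hs : ‖a k - y n‖ ≤ M + ‖c‖ + 1 :=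
        (norm_sub_le _ _).trans (by have := hM k; linarith)
      have ht0 : (0:ℝ) ≤ ‖y n - c‖ := norm_nonneg _
      have hsq := pow_le_pow_left₀ (norm_nonneg (a k - c)) h2 2
      nlinarith [mul_le_mul_of_nonneg_right hs ht0, mul_le_mul_of_nonneg_right hn1 ht0,
        norm_nonneg (a k - y n)]
    have hlim : Tendsto (fun n => φ (y n) + L * ‖y n - c‖) atTop (nhds (m + L * 0)) :=
      hφy_tendsto.add (hnorm0.const_mul L)
    rw [mul_zero, add_zero] at hlim
    exact ge_of_tendsto hlim hev
  have hφc : φ c = m := le_antisymm hφc_le (hm_le c)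
  refine ⟨c, ?_⟩
  have h1 := hshift c
  have h2 := hmid c (T c)
  have h3 := hm_le ((1/2:ℝ) • (c + T c))
  have h4 : ‖c - T c‖^2 ≤ 0 := by linarith
  have h5 : c - T c = 0 := by
    have := le_antisymm h4 (sq_nonneg _)
    rwa [pow_eq_zero_iff two_ne_zero, norm_eq_zero] at this
  exact (sub_eq_zero.mp h5).symm

section Main
theorem stmt7 (A B : H → Set H) (hA : MaximalMonotoneOp A) (hB : MaximalMonotoneOp B)
    (z : H) (β r : ℝ) (hβ : β ∈ Set.Ioo (0:ℝ) 1) (hr : 0 < r) (JA JB : H → H)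
    (hJA : ∀ w : H, ∃ m ∈ pert A z β (JA w), w = JA w + r • m)
    (hJB : ∀ w : H, ∃ m ∈ pert B z β (JB w), w = JB w + r • m)
    (T : H → H) (hT : ∀ x, T x = (2:ℝ) • JB ((2:ℝ) • JA x - x) - ((2:ℝ) • JA x - x)) :
    (∃ x : H, Bornology.IsBounded (Set.range fun k : ℕ => T^[k] x)) ↔
      {u : H | ∃ a ∈ A u, ∃ b ∈ B u, z = u + a + b}.Nonempty := by
  obtain ⟨hβ0, hβ1⟩ := hβ
  have hβne : β ≠ 0 := hβ0.ne'
  have hA' : MonotoneOp (pert A z β) := mono_pert hA.1 z hβ0 hβ1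
  have hB' : MonotoneOp (pert B z β) := mono_pert hB.1 z hβ0 hβ1
  constructor
  · rintro ⟨x, hbound⟩
    -- T is nonexpansive
    have hTne : ∀ u v : H, ‖T u - T v‖ ≤ ‖u - v‖ := by
      intro u v
      rw [hT u, hT v]
      exact (refl_nonexp hB' hr hJB ((2:ℝ)•JA u - u) ((2:ℝ)•JA v - v)).trans
        (refl_nonexp hA' hr hJA u v)
    obtain ⟨M, hM⟩ := (isBounded_iff_forall_norm_le).mp hbound
    have hM' : ∀ k : ℕ, ‖T^[k] x‖ ≤ M := fun k => hM _ ⟨k, rfl⟩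
    obtain ⟨c, hc⟩ := fixed_of_bounded hTne hM'
    -- extract the zero
    obtain ⟨mA, hmA, hcA⟩ := hJA c
    obtain ⟨mB, hmB, hwB⟩ := hJB ((2:ℝ)•JA c - c)
    have hTc : c = (2:ℝ)•JB ((2:ℝ)•JA c - c) - ((2:ℝ)•JA c - c) := by rw [← hT c, hc]
    have hJBw : JB ((2:ℝ)•JA c - c) = JA c := by
      have h2 : (2:ℝ)•JB ((2:ℝ)•JA c - c) = (2:ℝ)•JA c := by
        rw [sub_eq_iff_eq_add.mp hTc.symm]; module
      exact smul_right_injective H two_ne_zero h2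
    rw [hJBw] at hwB hmB
    -- hcA : c = JA c + r • mA ; hwB : 2•JA c - c = JA c + r • mB
    have hneg : mB = -mA := by
      have hr1 : r • mA = c - JA c := eq_sub_iff_add_eq.2 (by rw [add_comm]; exact hcA.symm)
      have hr2 : r • mB = ((2:ℝ)•JA c - c) - JA c :=
        eq_sub_iff_add_eq.2 (by rw [add_comm]; exact hwB.symm)
      have : r • mB = r • (-mA) := by rw [smul_neg, hr1, hr2]; module
      exact smul_right_injective H hr.ne' this
    obtain ⟨a, ha, haeq⟩ := hmA
    obtain ⟨b, hb, hbeq⟩ := hmB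
    dsimp only at haeq hbeq
    refine ⟨β⁻¹ • JA c + z, a, ha, b, hb, ?_⟩
    have hzero : ((2*(1-β))•a + ((1-β)/β)•(JA c)) + ((2*(1-β))•b + ((1-β)/β)•(JA c)) = 0 := by
      rw [haeq, hbeq, hneg, add_neg_cancel]
    have hkey : a + b + β⁻¹ • JA c = 0 := by
      have h2 : (2*(1-β)) • (a + b + β⁻¹ • JA c) = (0:H) := by
        rw [← hzero]
        match_scalars <;> (field_simp; try ring)
      have h2ne : (2*(1-β)) ≠ 0 := by
        have : (0:ℝ) < 1 - β := by linarith
        positivity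
      exact (smul_eq_zero.mp h2).resolve_left h2ne
    have : β⁻¹ • JA c + z + a + b = z + (a + b + β⁻¹ • JA c) := by abel
    rw [this, hkey, add_zero]
  · rintro ⟨u, a, ha, b, hb, hz⟩
    set p : H := β • (u - z) with hp
    have hu' : β⁻¹ • p + z = u := by
      rw [hp, smul_smul, inv_mul_cancel₀ hβne, one_smul, sub_add_cancel]
    set a' : H := (2*(1-β))•a + ((1-β)/β)•p with ha'
    set b' : H := (2*(1-β))•b + ((1-β)/β)•p with hb'
    have hmemA : a' ∈ pert A z β p := ⟨a, by rw [hu']; exact ha, rfl⟩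
    have hmemB : b' ∈ pert B z β p := ⟨b, by rw [hu']; exact hb, rfl⟩
    have hab : a + b + (u - z) = 0 := by rw [hz]; abel
    have hsum : a' + b' = 0 := by
      have h1 : a' + b' = (2*(1-β)) • (a + b + (u - z)) := by
        rw [ha', hb', hp]
        match_scalars <;> (field_simp; try ring)
      rw [h1, hab, smul_zero]
    have hbneg : b' = -a' := eq_neg_of_add_eq_zero_right hsum
    have hJAx : JA (p + r • a') = p := res_uniq hA' hr hJA hmemA rfl
    have hJBx : JB (p + r • b') = p := res_uniq hB' hr hJB hmemB rfl
    have hrefl : (2:ℝ) • JA (p + r • a') - (p + r • a') = p + r • b' := by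
      rw [hJAx, hbneg, smul_neg]; module
    have hTx : T (p + r • a') = p + r • a' := by
      rw [hT, hrefl, hJBx, hbneg, smul_neg]; module
    refine ⟨p + r • a', ?_⟩
    refine Bornology.IsBounded.subset (Bornology.isBounded_singleton (x := p + r • a')) ?_
    rintro - ⟨k, rfl⟩
    simp [Function.iterate_fixed hTx k]

end Main
end

section
/- Let β ∈ (0,1) and (r_k) be defined by r_0 ∈ (0, 2(1−β)/β) and r_{k+1} = r_k / √(1 + 2 r_k (1−β)/β). Then lim_{k→∞} (k+1)·r_k = β/(1−β); in particular r_k = O(1/k). -/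
theorem stmt11 (β : ℝ) (hβ : β ∈ Set.Ioo (0:ℝ) 1) (r : ℕ → ℝ)
    (h0 : r 0 ∈ Set.Ioo 0 (2 * (1 - β) / β))
    (hrec : ∀ k, r (k + 1) = r k / Real.sqrt (1 + 2 * r k * (1 - β) / β)) :
    Filter.Tendsto (fun k : ℕ => ((k : ℝ) + 1) * r k) Filter.atTop (nhds (β / (1 - β))) ∧
      ∃ C : ℝ, ∀ k : ℕ, 1 ≤ k → r k ≤ C / k := by
  obtain ⟨hβ0, hβ1⟩ := hβ
  set c : ℝ := (1 - β) / β with hc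
  have hc0 : 0 < c := div_pos (by linarith) hβ0
  have hform : ∀ k, 1 + 2 * r k * (1 - β) / β = 1 + 2 * r k * c := by
    intro k; rw [hc]; ring
  have hpos : ∀ k, 0 < r k := by
    intro k
    induction k with
    | zero => exact h0.1
    | succ k ih =>
      rw [hrec, hform]
      exact div_pos ih (Real.sqrt_pos.mpr (by nlinarith))
  set a : ℕ → ℝ := fun k => Real.sqrt (1 + 2 * r k * c) with ha
  have harg : ∀ k, (0:ℝ) ≤ 1 + 2 * r k * c := by
    intro k; nlinarith [hpos k, hc0]
  have ha1 : ∀ k, 1 ≤ a k := by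
    intro k
    rw [ha]
    simp only
    rw [Real.one_le_sqrt]
    nlinarith [hpos k, hc0]
  have ha0 : ∀ k, 0 < a k := fun k => lt_of_lt_of_le one_pos (ha1 k)
  have hasq : ∀ k, (a k) ^ 2 = 1 + 2 * r k * c := fun k => Real.sq_sqrt (harg k)
  have hrec' : ∀ k, r (k + 1) = r k / a k := by
    intro k; rw [hrec, hform, ha]
  -- monotonicity
  have hstep : ∀ k, r (k + 1) ≤ r k := by
    intro k
    rw [hrec']
    exact div_le_self (hpos k).le (ha1 k)
  have hmono : ∀ k, r k ≤ r 0 := by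
    intro k
    induction k with
    | zero => exact le_refl (r 0)
    | succ k ih => exact le_trans (hstep k) ih
  -- increments of 1/r
  set d : ℕ → ℝ := fun k => (r (k + 1))⁻¹ - (r k)⁻¹ with hd
  have hdval : ∀ k, d k = 2 * c / (a k + 1) := by
    intro k
    have hrk := hpos k
    have hak := ha0 k
    rw [hd]
    simp only
    rw [hrec']
    have hak1 : (0:ℝ) < a k + 1 := by linarith
    have h1 : r k ≠ 0 := hrk.ne'
    have h2 : a k + 1 ≠ 0 := hak1.ne'
    have h3 : a k ≠ 0 := (ha0 k).ne'
    rw [inv_div]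
    field_simp
    nlinarith [hasq k]
  -- lower bound on increments
  set A : ℝ := Real.sqrt (1 + 2 * r 0 * c) with hA
  have hAa : ∀ k, a k ≤ A := by
    intro k
    exact Real.sqrt_le_sqrt (by nlinarith [hmono k, hpos k, hc0])
  have hA0 : 0 < A := lt_of_lt_of_le (ha0 0) (hAa 0)
  set δ : ℝ := 2 * c / (A + 1) with hδ
  have hδ0 : 0 < δ := div_pos (by linarith) (by linarith)
  have hdlb : ∀ k, δ ≤ d k := by
    intro k
    rw [hdval k, hδ]
    apply div_le_div_of_nonneg_left (by linarith) (by nlinarith [ha0 k])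
    linarith [hAa k]
  -- 1/r n → ∞
  have htlb : ∀ n : ℕ, (r 0)⁻¹ + n * δ ≤ (r n)⁻¹ := by
    intro n
    induction n with
    | zero => simp
    | succ n ih =>
      have : (r (n+1))⁻¹ = (r n)⁻¹ + d n := by rw [hd]; ring
      push_cast
      calc (r 0)⁻¹ + ((n:ℝ) + 1) * δ = ((r 0)⁻¹ + (n:ℝ) * δ) + δ := by ring
        _ ≤ (r n)⁻¹ + d n := add_le_add ih (hdlb n)
        _ = (r (n + 1))⁻¹ := this.symm
  have htinf : Filter.Tendsto (fun n : ℕ => (r n)⁻¹) Filter.atTop Filter.atTop := by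
    apply Filter.tendsto_atTop_mono htlb
    apply Filter.tendsto_atTop_add_const_left
    exact Filter.Tendsto.atTop_mul_const hδ0 tendsto_natCast_atTop_atTop
  have hr0' : Filter.Tendsto r Filter.atTop (nhds 0) := by
    have h := htinf.inv_tendsto_atTop
    have heq : (fun n : ℕ => (r n)⁻¹)⁻¹ = r := by funext n; simp
    rwa [heq] at h
  -- a n → 1
  have hatend : Filter.Tendsto a Filter.atTop (nhds 1) := by
    have h1 : Filter.Tendsto (fun n => 1 + 2 * r n * c) Filter.atTop (nhds 1) := by
      have : Filter.Tendsto (fun n => 2 * r n * c) Filter.atTop (nhds 0) := by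
        have := (hr0'.const_mul 2).mul_const c
        simpa using this
      simpa using (tendsto_const_nhds.add this : Filter.Tendsto (fun n => 1 + 2 * r n * c) Filter.atTop (nhds (1 + 0)))
    have := (Real.continuous_sqrt.tendsto 1).comp h1
    simpa [ha, Real.sqrt_one, Function.comp_def] using this
  -- d n → c
  have hdtend : Filter.Tendsto d Filter.atTop (nhds c) := by
    have h2 : Filter.Tendsto (fun n => a n + 1) Filter.atTop (nhds 2) := by
      have h := hatend.add (tendsto_const_nhds : Filter.Tendsto (fun _ : ℕ => (1:ℝ)) Filter.atTop (nhds 1))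
      norm_num at h
      exact h
    have h3 : Filter.Tendsto (fun n => 2 * c / (a n + 1)) Filter.atTop (nhds (2 * c / 2)) :=
      Filter.Tendsto.div tendsto_const_nhds h2 two_ne_zero
    have h4 : 2 * c / 2 = c := by ring
    rw [h4] at h3
    have : d = fun n => 2 * c / (a n + 1) := funext hdval
    rw [this]
    exact h3
  -- Cesàro
  have hces : Filter.Tendsto (fun n : ℕ => (n : ℝ)⁻¹ * ∑ i ∈ Finset.range n, d i)
      Filter.atTop (nhds c) := hdtend.cesaro
  have hsum : ∀ n, ∑ i ∈ Finset.range n, d i = (r n)⁻¹ - (r 0)⁻¹ := by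
    intro n
    rw [hd]
    simpa using Finset.sum_range_sub (fun k => (r k)⁻¹) n
  have hq : Filter.Tendsto (fun n : ℕ => (n : ℝ)⁻¹ * (r n)⁻¹) Filter.atTop (nhds c) := by
    have h5 : Filter.Tendsto (fun n : ℕ => (n : ℝ)⁻¹ * (r 0)⁻¹) Filter.atTop (nhds 0) := by
      have := (tendsto_inv_atTop_nhds_zero_nat (𝕜 := ℝ)).mul_const ((r 0)⁻¹)
      simpa using this
    have h6 := hces.add h5
    rw [add_zero] at h6
    apply h6.congr
    intro n
    rw [hsum]
    ring
  -- n * r n → c⁻¹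
  have hnr : Filter.Tendsto (fun n : ℕ => (n : ℝ) * r n) Filter.atTop (nhds c⁻¹) := by
    have h7 := hq.inv₀ hc0.ne'
    apply h7.congr'
    filter_upwards [Filter.eventually_ge_atTop 1] with n hn
    have hn0 : (0:ℝ) < (n : ℝ) := by exact_mod_cast Nat.pos_of_ne_zero (by omega)
    rw [mul_inv, inv_inv, inv_inv]
  have hcinv : c⁻¹ = β / (1 - β) := by
    rw [hc, inv_div]
  -- main limit
  have hmain : Filter.Tendsto (fun k : ℕ => ((k : ℝ) + 1) * r k) Filter.atTop
      (nhds (β / (1 - β))) := by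
    have h8 := hnr.add hr0'
    rw [add_zero, hcinv] at h8
    apply h8.congr
    intro n
    ring
  refine ⟨hmain, ?_⟩
  -- boundedness
  obtain ⟨C, hC⟩ := hmain.bddAbove_range
  rw [upperBounds] at hC
  have hCb : ∀ k : ℕ, ((k : ℝ) + 1) * r k ≤ C := by
    intro k
    exact hC (Set.mem_range_self k)
  refine ⟨C, fun k hk => ?_⟩
  have hk0 : (0:ℝ) < (k : ℝ) := by exact_mod_cast hk
  rw [le_div_iff₀ hk0]
  have := hpos k
  nlinarith [hCb k]
end

section
/- Let A, B be maximal monotone operators on a real Hilbert space H with S = {u : z ∈ (I+A+B)(u)} nonempty, z ∈ H, β ∈ (0,1), and (r_k) positive with r_{k+1} = r_k/√(1 + 2r_k(1−β)/β). Let (x_k), (y_k), (z_k) satisfy x_{k+1} = J_{r_k(A_z)^{(β)}}(z_k + r_k y_k), y_{k+1} = (1/r_k)(z_k + r_k y_k − x_{k+1}), z_{k+1} = J_{r_{k+1}(B_z)^{(β)}}(x_{k+1} − r_{k+1} y_{k+1}). Let r > 0, u a fixed point of (2J_{r(B_z)^{(β)}} − I) ∘ (2J_{r(A_z)^{(β)}}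 − I), v = J_{r(A_z)^{(β)}}(u), and v_A = (1/r)(u − v). Then for all k: (1/r_{k+1}²)‖x_{k+1} − v‖² + ‖y_{k+1} − v_A‖² ≤ (1/r_k²)‖x_k − v‖² + ‖y_k − v_A‖². -/
open scoped RealInnerProductSpace

variable {H : Type*} [NormedAddCommGroup H] [InnerProductSpace ℝ H] [CompleteSpace H]

lemma pert_strong (A : H → Set H) (hA : MonotoneOp A) (z : H) {β : ℝ}
    (hβ0 : 0 < β) (hβ1 : β < 1) : StronglyMonotoneOp ((1 - β) / β) (pert A z β) := by
  rintro x y x' y' ⟨a, ha, rfl⟩ ⟨b, hb, rfl⟩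
  have h1 : (0:ℝ) ≤ ⟪(β⁻¹ • x + z) - (β⁻¹ • y + z), a - b⟫ := hA ha hb
  have hβx : ∀ p : H, β • (β⁻¹ • p) = p := fun p => by
    rw [smul_smul, mul_inv_cancel₀ hβ0.ne', one_smul]
  have hxy : x - y = β • ((β⁻¹ • x + z) - (β⁻¹ • y + z)) := by
    rw [smul_sub, smul_add, smul_add, hβx, hβx]
    abel
  have expand : ((2 * (1 - β)) • a + ((1 - β) / β) • x) - ((2 * (1 - β)) • b + ((1 - β) / β) • y)
      = (2 * (1 - β)) • (a - b) + ((1 - β) / β) • (x - y) := by module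
  have h2 : ⟪x - y, a - b⟫ = β * ⟪(β⁻¹ • x + z) - (β⁻¹ • y + z), a - b⟫ := by
    conv_lhs => rw [hxy]
    rw [real_inner_smul_left]
  rw [expand, inner_add_right, real_inner_smul_right, real_inner_smul_right,
    real_inner_self_eq_norm_sq, h2]
  nlinarith [mul_nonneg (mul_nonneg (by linarith : (0:ℝ) ≤ 2 * (1 - β)) hβ0.le) h1]

lemma div_ineq_helper (s na nb ne nd rk : ℝ) (h : 0 < rk)
    (hk : s * na + rk ^ 2 * nb ≤ ne + rk ^ 2 * nd) :
    s / rk ^ 2 * na + nb ≤ (rk⁻¹) ^ 2 * ne + nd := by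
  have h2 : (0:ℝ) < rk ^ 2 := by positivity
  have hle := mul_le_mul_of_nonneg_left hk (le_of_lt (inv_pos.2 h2))
  have hcanc : (rk ^ 2)⁻¹ * rk ^ 2 = 1 := inv_mul_cancel₀ h2.ne'
  have e1 : (rk ^ 2)⁻¹ * (s * na + rk ^ 2 * nb) = s / rk ^ 2 * na + nb := by
    field_simp
  have e2 : (rk ^ 2)⁻¹ * (ne + rk ^ 2 * nd) = (rk⁻¹) ^ 2 * ne + nd := by
    field_simp
  rw [e1, e2] at hle
  exact hle

theorem stmt12 (A B : H → Set H) (hA : MaximalMonotoneOp A) (hB : MaximalMonotoneOp B)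
    (z : H) (β : ℝ) (hβ : β ∈ Set.Ioo (0:ℝ) 1)
    (hS : {u : H | ∃ a ∈ A u, ∃ b ∈ B u, z = u + a + b}.Nonempty)
    (r : ℕ → ℝ) (hrpos : ∀ k, 0 < r k)
    (hrec : ∀ k, r (k + 1) = r k / Real.sqrt (1 + 2 * r k * (1 - β) / β))
    (x y w : ℕ → H)
    (hx : ∀ k, ∃ m ∈ pert A z β (x (k + 1)), w k + r k • y k = x (k + 1) + r k • m)
    (hy : ∀ k, y (k + 1) = (r k)⁻¹ • (w k + r k • y k - x (k + 1)))
    (hw : ∀ k, ∃ m ∈ pert B z β (w k), x k - r k • y k = w k + r k • m)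
    (ρ : ℝ) (hρ : 0 < ρ) (JA JB : H → H)
    (hJA : ∀ q : H, ∃ m ∈ pert A z β (JA q), q = JA q + ρ • m)
    (hJB : ∀ q : H, ∃ m ∈ pert B z β (JB q), q = JB q + ρ • m)
    (u : H) (hu : (2:ℝ) • JB ((2:ℝ) • JA u - u) - ((2:ℝ) • JA u - u) = u)
    (v vA : H) (hv : v = JA u) (hvA : vA = ρ⁻¹ • (u - v)) :
    ∀ k, ((r (k + 1))⁻¹) ^ 2 * ‖x (k + 1) - v‖ ^ 2 + ‖y (k + 1) - vA‖ ^ 2 ≤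
      ((r k)⁻¹) ^ 2 * ‖x k - v‖ ^ 2 + ‖y k - vA‖ ^ 2 := by
  obtain ⟨hβ0, hβ1⟩ := hβ
  have hσpos : (0:ℝ) < (1 - β) / β := div_pos (by linarith) hβ0
  have hsA := pert_strong A hA.1 z hβ0 hβ1
  have hsB := pert_strong B hB.1 z hβ0 hβ1
  have hinj : Function.Injective (fun p : H => ρ • p) := smul_right_injective H hρ.ne'
  -- vA ∈ pert A z β v
  have hvAmem : vA ∈ pert A z β v := by
    obtain ⟨m, hm, he⟩ := hJA u
    have hmvA : m = vA := by
      apply hinj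
      show ρ • m = ρ • vA
      rw [hvA, smul_smul, mul_inv_cancel₀ hρ.ne', one_smul, hv]
      linear_combination (norm := module) -he
    rw [← hmvA, hv]; exact hm
  -- -vA ∈ pert B z β v
  have hvBmem : -vA ∈ pert B z β v := by
    obtain ⟨m, hm, he⟩ := hJB ((2:ℝ) • JA u - u)
    have hJBp : JB ((2:ℝ) • JA u - u) = JA u := by
      have h2 : (2:ℝ) • JB ((2:ℝ) • JA u - u) = (2:ℝ) • JA u := by
        have := hu
        linear_combination (norm := module) this
      exact smul_right_injective H (two_ne_zero) h2
    have hmv : m = -vA := by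
      apply hinj
      show ρ • m = ρ • (-vA)
      rw [hvA, smul_neg, smul_smul, mul_inv_cancel₀ hρ.ne', one_smul, hv]
      rw [hJBp] at he
      linear_combination (norm := module) -he
    rw [← hmv, hv, ← hJBp]; exact hm
  intro k
  have hrk := hrpos k
  obtain ⟨mA, hmA, heA⟩ := hx k
  have hyk1 : y (k + 1) = mA := by
    rw [hy k, heA, add_sub_cancel_left, smul_smul, inv_mul_cancel₀ hrk.ne', one_smul]
  obtain ⟨mB, hmB, heB⟩ := hw k
  have I1 : ((1 - β) / β) * ‖x (k + 1) - v‖ ^ 2 ≤ ⟪x (k + 1) - v, y (k + 1) - vA⟫ := by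
    apply hsA _ hvAmem
    rw [hyk1]; exact hmA
  have I2 : ((1 - β) / β) * ‖w k - v‖ ^ 2 ≤ ⟪w k - v, mB - -vA⟫ := hsB hmB hvBmem
  set σ := (1 - β) / β with hσdef
  set a := x (k + 1) - v with ha
  set b := y (k + 1) - vA with hb
  set c := w k - v with hc
  set d := y k - vA with hd
  set e := x k - v with he'
  have hrel1 : c + r k • d = a + r k • b := by
    have h4 : w k + r k • y k = x (k + 1) + r k • y (k + 1) := by rw [hyk1]; exact heA
    rw [ha, hb, hc, hd]
    linear_combination (norm := module) h4
  have hrel2 : r k • (mB - -vA) = e - r k • d - c := by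
    rw [he', hd, hc]
    linear_combination (norm := module) -heB
  have expandI : ∀ (p q : H) (t : ℝ), ⟪p + t • q, p + t • q⟫ =
      ‖p‖ ^ 2 + 2 * (t * ⟪p, q⟫) + t ^ 2 * ‖q‖ ^ 2 := by
    intro p q t
    rw [real_inner_add_add_self, real_inner_smul_right, real_inner_smul_left,
      real_inner_smul_right, real_inner_self_eq_norm_sq, real_inner_self_eq_norm_sq]
    ring
  have F1 : ‖c‖ ^ 2 + 2 * (r k * ⟪c, d⟫) + (r k) ^ 2 * ‖d‖ ^ 2 =
      ‖a‖ ^ 2 + 2 * (r k * ⟪a, b⟫) + (r k) ^ 2 * ‖b‖ ^ 2 := by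
    rw [← expandI, ← expandI, hrel1]
  have I2' : r k * (σ * ‖c‖ ^ 2) ≤ ⟪c, e⟫ - r k * ⟪c, d⟫ - ‖c‖ ^ 2 := by
    have step1 : r k * (σ * ‖c‖ ^ 2) ≤ r k * ⟪c, mB - -vA⟫ :=
      mul_le_mul_of_nonneg_left I2 hrk.le
    rw [← real_inner_smul_right, hrel2, inner_sub_right, inner_sub_right,
      real_inner_smul_right, real_inner_self_eq_norm_sq] at step1
    exact step1
  have F4 : (0:ℝ) ≤ ‖e‖ ^ 2 - 2 * ⟪c, e⟫ + ‖c‖ ^ 2 := by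
    have h5 := norm_sub_sq_real e c
    have hcomm : ⟪e, c⟫ = ⟪c, e⟫ := real_inner_comm c e
    nlinarith [sq_nonneg ‖e - c‖, h5, hcomm]
  have key : (1 + 2 * r k * (1 - β) / β) * ‖a‖ ^ 2 + (r k) ^ 2 * ‖b‖ ^ 2 ≤
      ‖e‖ ^ 2 + (r k) ^ 2 * ‖d‖ ^ 2 := by
    have hσeq : 2 * r k * (1 - β) / β = 2 * r k * σ := by rw [hσdef]; ring
    rw [hσeq]
    have I1' : r k * (σ * ‖a‖ ^ 2) ≤ r k * ⟪a, b⟫ := mul_le_mul_of_nonneg_left I1 hrk.le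
    have hcc : (0:ℝ) ≤ r k * σ * ‖c‖ ^ 2 := by positivity
    have hc0 : (0:ℝ) ≤ ‖c‖ ^ 2 := sq_nonneg _
    linarith [F1, I1', I2', F4, hcc, hc0]
  have hs : (0:ℝ) < 1 + 2 * r k * (1 - β) / β := by
    have : (0:ℝ) < 2 * r k * (1 - β) / β := by
      apply div_pos _ hβ0
      have := hrk
      nlinarith
    linarith
  have hrk1 : ((r (k + 1))⁻¹) ^ 2 = (1 + 2 * r k * (1 - β) / β) / (r k) ^ 2 := by
    rw [hrec k, inv_div, div_pow, Real.sq_sqrt hs.le]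
  rw [hrk1]
  exact div_ineq_helper _ _ _ _ _ _ hrk key
end

section
/- Under the assumptions of the Fejér-type inequality (1/r_{k+1}²)‖x_{k+1}−v‖² + ‖y_{k+1}−v_A‖² ≤ (1/r_k²)‖x_k−v‖² + ‖y_k−v_A‖² for a sequence (r_k) with r_{k+1} = r_k/√(1+2r_k(1−β)/β), r_0 ∈ (0, 2(1−β)/β), β ∈ (0,1), one has ‖x_{k+1} − v‖² ≤ r_{k+1}²·((1/r_0²)‖x_0 − v‖² + ‖y_0 − v_A‖²), and consequently ‖x_{k+1} − v‖ = O(1/k). -/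
open scoped RealInnerProductSpace

variable {H : Type*} [NormedAddCommGroup H] [InnerProductSpace ℝ H] [CompleteSpace H]

set_option maxHeartbeats 800000 in
theorem stmt13 (β : ℝ) (hβ : β ∈ Set.Ioo (0:ℝ) 1) (r : ℕ → ℝ)
    (h0 : r 0 ∈ Set.Ioo 0 (2 * (1 - β) / β)) (hpos : ∀ k, 0 < r k)
    (hrec : ∀ k, r (k + 1) = r k / Real.sqrt (1 + 2 * r k * (1 - β) / β))
    (x y : ℕ → H) (v vA : H)
    (h : ∀ k, ((r (k + 1))⁻¹) ^ 2 * ‖x (k + 1) - v‖ ^ 2 + ‖y (k + 1) - vA‖ ^ 2 ≤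
      ((r k)⁻¹) ^ 2 * ‖x k - v‖ ^ 2 + ‖y k - vA‖ ^ 2) :
    (∀ k, ‖x (k + 1) - v‖ ^ 2 ≤
        (r (k + 1)) ^ 2 * (((r 0)⁻¹) ^ 2 * ‖x 0 - v‖ ^ 2 + ‖y 0 - vA‖ ^ 2)) ∧
      ∃ C : ℝ, ∀ k : ℕ, 1 ≤ k → ‖x (k + 1) - v‖ ≤ C / k := by
  obtain ⟨hβ0, hβ1⟩ := hβ
  set M : ℝ := ((r 0)⁻¹) ^ 2 * ‖x 0 - v‖ ^ 2 + ‖y 0 - vA‖ ^ 2 with hMdef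
  have hM : 0 ≤ M := by positivity
  have key : ∀ k, ((r k)⁻¹) ^ 2 * ‖x k - v‖ ^ 2 + ‖y k - vA‖ ^ 2 ≤ M := by
    intro k
    induction k with
    | zero => exact le_refl M
    | succ n ih => exact (h n).trans ih
  have part1 : ∀ k, ‖x (k + 1) - v‖ ^ 2 ≤ (r (k + 1)) ^ 2 * M := by
    intro k
    have h1 : ((r (k+1))⁻¹) ^ 2 * ‖x (k+1) - v‖ ^ 2 ≤ M := by
      have := key (k+1)
      nlinarith [sq_nonneg ‖y (k+1) - vA‖]
    have hr : 0 < r (k+1) := hpos (k+1)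
    have h2 := mul_le_mul_of_nonneg_left h1 (sq_nonneg (r (k+1)))
    calc ‖x (k + 1) - v‖ ^ 2
        = (r (k+1)) ^ 2 * (((r (k+1))⁻¹) ^ 2 * ‖x (k+1) - v‖ ^ 2) := by
          field_simp
      _ ≤ (r (k + 1)) ^ 2 * M := h2
  refine ⟨part1, ?_⟩
  set c : ℝ := 2 * (1 - β) / β with hcdef
  have hc : 0 < c := by
    apply div_pos <;> linarith
  set s : ℕ → ℝ := fun k => (r k)⁻¹ with hsdef
  have hspos : ∀ k, 0 < s k := fun k => inv_pos.mpr (hpos k)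
  set δ : ℝ := min (c / 4) (Real.sqrt (c * s 0 / 2)) with hδdef
  have hcs : 0 < c * s 0 / 2 := by
    have := hspos 0
    positivity
  have hδ : 0 < δ := by
    apply lt_min
    · linarith
    · exact Real.sqrt_pos.mpr hcs
  have hδc : δ ≤ c / 4 := min_le_left _ _
  have hδs : δ ^ 2 ≤ c * s 0 / 2 := by
    have h1 : δ ≤ Real.sqrt (c * s 0 / 2) := min_le_right _ _
    have h2 : δ ^ 2 ≤ Real.sqrt (c * s 0 / 2) ^ 2 :=
      pow_le_pow_left₀ hδ.le h1 2
    rwa [Real.sq_sqrt hcs.le] at h2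
  have hsrec : ∀ k, s k ^ 2 + c * s k ≤ s (k + 1) ^ 2 := by
    intro k
    have hrk := hpos k
    have harg : (0:ℝ) < 1 + 2 * r k * (1 - β) / β := by
      have h1 : 0 < 2 * r k * (1 - β) / β := div_pos (by nlinarith) hβ0
      linarith
    have heq : s (k + 1) = Real.sqrt (1 + 2 * r k * (1 - β) / β) / r k := by
      simp only [hsdef, hrec k]
      rw [inv_div]
    have hsq : s (k + 1) ^ 2 = (1 + 2 * r k * (1 - β) / β) / r k ^ 2 := by
      rw [heq, div_pow, Real.sq_sqrt harg.le]
    rw [hsq]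
    have hcr : 2 * r k * (1 - β) / β = c * r k := by
      rw [hcdef]; field_simp
    rw [hcr]
    have hexp : (1 + c * r k) / r k ^ 2 = s k ^ 2 + c * s k := by
      simp only [hsdef]
      field_simp
    rw [hexp]
  -- s grows linearly: s k ≥ s 0 + δ * k
  have hgrow : ∀ k : ℕ, s 0 + δ * k ≤ s k := by
    intro k
    induction k with
    | zero => simp
    | succ n ih =>
      have hsn : s 0 ≤ s n := by
        have : (0:ℝ) ≤ δ * n := by positivity
        linarith
      have hstep : s n + δ ≤ s (n + 1) := by
        have h1 : (s n + δ) ^ 2 ≤ s (n + 1) ^ 2 := by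
          have := hsrec n
          nlinarith [hspos n, hspos 0]
        have h2 : 0 ≤ s n + δ := by nlinarith [hspos n]
        nlinarith [hspos (n + 1)]
      push_cast
      linarith
  set C : ℝ := Real.sqrt M / δ with hCdef
  refine ⟨C, fun k hk => ?_⟩
  have hk1 : (1:ℝ) ≤ (k:ℝ) := by exact_mod_cast hk
  have hs1 : δ * ((k:ℝ) + 1) ≤ s (k + 1) := by
    have h1 := hgrow (k + 1)
    push_cast at h1
    have h2 := hspos 0
    linarith
  have hkpos : (0:ℝ) < (k:ℝ) := by linarith
  have hδk : 0 < δ * (k:ℝ) := mul_pos hδ hkpos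
  have hrle : r (k + 1) ≤ 1 / (δ * k) := by
    have hsk : δ * (k:ℝ) ≤ s (k + 1) := by
      have hd : δ * ((k:ℝ) + 1) = δ * k + δ := by ring
      linarith
    have hrk := hpos (k + 1)
    have hsk' : s (k + 1) = (r (k+1))⁻¹ := rfl
    rw [hsk'] at hsk
    rw [le_div_iff₀ hδk]
    calc r (k+1) * (δ * k) ≤ r (k+1) * (r (k+1))⁻¹ :=
          mul_le_mul_of_nonneg_left hsk hrk.le
      _ = 1 := mul_inv_cancel₀ hrk.ne'
  have hnorm : ‖x (k + 1) - v‖ ≤ r (k + 1) * Real.sqrt M := by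
    have h1 := part1 k
    have h2 : r (k+1) * Real.sqrt M = Real.sqrt ((r (k+1))^2 * M) := by
      rw [Real.sqrt_mul (sq_nonneg _), Real.sqrt_sq (hpos (k+1)).le]
    rw [h2]
    have := Real.sqrt_le_sqrt h1
    rwa [Real.sqrt_sq (norm_nonneg _)] at this
  calc ‖x (k + 1) - v‖ ≤ r (k + 1) * Real.sqrt M := hnorm
    _ ≤ (1 / (δ * k)) * Real.sqrt M := by
        exact mul_le_mul_of_nonneg_right hrle (Real.sqrt_nonneg M)
    _ = C / k := by
        rw [hCdef]
        field_simp
end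

section
/- Let A, B be maximal monotone operators on a real Hilbert space H with S = {u : z ∈ (I+A+B)(u)} ≠ ∅, and let (x_k) be generated by the splitting iteration x_{k} = β J_{(2r_{k-1}(1−β)/(β+r_{k-1}(1−β)))A}( (z_{k-1}+r_{k-1}y_{k-1})/(β+r_{k-1}(1−β)) + z ) − βz, y_k = (1/r_{k-1})(z_{k-1}+r_{k-1}y_{k-1}−x_k), z_k = β J_{(2r_k(1−β)/(β+r_k(1−β)))B}( (x_k − r_k y_k)/(β+r_k(1−β)) + z ) − βz, with β ∈ (0,1), r_0 ∈ (0, 2(1−β)/β), r_{k+1} = r_k/√(1+2r_k(1−β)/β). Then (1/β)x_k + z converges strongly to J_{A+B}(z) and ‖(1/β)x_{k+1} + z − J_{A+B}(z)‖ = O(1/k). -/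
open scoped RealInnerProductSpace

variable {H : Type*} [NormedAddCommGroup H] [InnerProductSpace ℝ H] [CompleteSpace H]

lemma key_ineq (α rr rr' : ℝ) (hα : 0 < α) (hrr : 0 < rr) (hrr' : 0 < rr')
    (hS : rr' ^ 2 * (1 + 2 * rr * α) = rr ^ 2)
    (p q p' q' : H) (hR : p' = p - rr' • q - rr' • q')
    (I1 : α * ‖p‖ ^ 2 ≤ ⟪p, q⟫) (I2 : α * ‖p'‖ ^ 2 ≤ ⟪p', q'⟫) :
    rr ^ 2 * ‖p' + rr' • q‖ ^ 2 ≤ rr' ^ 2 * ‖p + rr • q‖ ^ 2 := by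
  have hpq : p' + rr' • q = p - rr' • q' := by rw [hR]; module
  rw [hpq]
  have e1 : ‖p - rr' • q'‖ ^ 2 = ‖p‖ ^ 2 - 2 * (rr' * ⟪p, q'⟫) + rr' ^ 2 * ‖q'‖ ^ 2 := by
    rw [norm_sub_sq_real, real_inner_smul_right, norm_smul, Real.norm_eq_abs,
      abs_of_pos hrr']
    ring
  have e2 : ‖p + rr • q‖ ^ 2 = ‖p‖ ^ 2 + 2 * (rr * ⟪p, q⟫) + rr ^ 2 * ‖q‖ ^ 2 := by
    rw [norm_add_sq_real, real_inner_smul_right, norm_smul, Real.norm_eq_abs,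
      abs_of_pos hrr]
    ring
  have eI : ⟪p', q'⟫ = ⟪p, q'⟫ - rr' * ⟪q, q'⟫ - rr' * ‖q'‖ ^ 2 := by
    rw [hR, inner_sub_left, inner_sub_left, real_inner_smul_left, real_inner_smul_left,
      real_inner_self_eq_norm_sq]
  have T2 : 0 ≤ ⟪p, q'⟫ - rr' * ⟪q, q'⟫ - rr' * ‖q'‖ ^ 2 := by
    have h0 : (0:ℝ) ≤ α * ‖p'‖ ^ 2 := by positivity
    rw [eI] at I2
    linarith
  have T3 : (0:ℝ) ≤ ‖q‖ ^ 2 + 2 * ⟪q, q'⟫ + ‖q'‖ ^ 2 := by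
    have := sq_nonneg ‖q + q'‖
    rw [norm_add_sq_real] at this
    linarith
  rw [e1, e2]
  nlinarith [mul_nonneg (by positivity : (0:ℝ) ≤ 2 * rr * rr' ^ 2) (by linarith : (0:ℝ) ≤ ⟪p, q⟫ - α * ‖p‖ ^ 2),
    mul_nonneg (by positivity : (0:ℝ) ≤ 2 * rr' * rr ^ 2) T2,
    mul_nonneg (by positivity : (0:ℝ) ≤ rr ^ 2 * rr' ^ 2) T3,
    mul_le_mul_of_nonneg_left (le_of_eq hS) (sq_nonneg ‖p‖)]

lemma unpack (A : H → Set H) (J : ℝ → H → H)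
    (hJ : ∀ s : ℝ, 0 < s → ∀ q : H, ∃ m ∈ A (J s q), q = J s q + s • m)
    (z : H) (β ρ : ℝ) (hβ0 : 0 < β) (hβ1 : β < 1) (hρ : 0 < ρ)
    (inp out : H)
    (hout : out = β • J (2 * ρ * (1 - β) / (β + ρ * (1 - β)))
      ((β + ρ * (1 - β))⁻¹ • inp + z) - β • z) :
    ∃ m ∈ A (β⁻¹ • out + z),
      inp = out + ρ • (((1 - β) / β) • out + (2 * (1 - β)) • m) := by
  have h1β : (0:ℝ) < 1 - β := by linarith
  set d : ℝ := β + ρ * (1 - β) with hd_def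
  have hd : 0 < d := by positivity
  set s : ℝ := 2 * ρ * (1 - β) / d with hs_def
  have hs : 0 < s := by positivity
  obtain ⟨m, hm, hq⟩ := hJ s hs (d⁻¹ • inp + z)
  set U : H := J s (d⁻¹ • inp + z) with hU_def
  have hU : β⁻¹ • out + z = U := by
    rw [hout]; match_scalars <;> field_simp <;> ring
  refine ⟨m, by rwa [hU], ?_⟩
  have h2 := congrArg (fun v : H => d • v) hq
  simp only [smul_add, smul_smul] at h2
  rw [mul_inv_cancel₀ hd.ne', one_smul] at h2
  have hds : d * s = 2 * ρ * (1 - β) := by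
    rw [hs_def]; field_simp
  rw [hds] at h2
  have h3 : inp = d • U + (2 * ρ * (1 - β)) • m - d • z := by
    rw [← h2]; abel
  rw [h3, hout, hd_def]
  match_scalars <;> field_simp <;> ring

lemma strong (A : H → Set H) (hA : MonotoneOp A) (z : H) (β : ℝ)
    (hβ0 : 0 < β) (hβ1 : β < 1) (X Y mX mY : H)
    (hX : mX ∈ A (β⁻¹ • X + z)) (hY : mY ∈ A (β⁻¹ • Y + z)) :
    ((1 - β) / β) * ‖X - Y‖ ^ 2 ≤
      ⟪X - Y, (((1 - β) / β) • X + (2 * (1 - β)) • mX)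
        - (((1 - β) / β) • Y + (2 * (1 - β)) • mY)⟫ := by
  have hmono := hA hX hY
  have hl : (β⁻¹ • X + z) - (β⁻¹ • Y + z) = β⁻¹ • (X - Y) := by module
  rw [hl, real_inner_smul_left] at hmono
  have hbinv : (0:ℝ) < β⁻¹ := by positivity
  have ht : 0 ≤ ⟪X - Y, mX - mY⟫ := by nlinarith [hmono]
  have hr : (((1 - β) / β) • X + (2 * (1 - β)) • mX)
      - (((1 - β) / β) • Y + (2 * (1 - β)) • mY)
      = ((1 - β) / β) • (X - Y) + (2 * (1 - β)) • (mX - mY) := by module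
  rw [hr, inner_add_right, real_inner_smul_right, real_inner_smul_right,
    real_inner_self_eq_norm_sq]
  nlinarith [ht]

set_option maxHeartbeats 1600000 in
theorem stmt14 (A B : H → Set H) (hA : MaximalMonotoneOp A) (hB : MaximalMonotoneOp B)
    (z : H) (β : ℝ) (hβ : β ∈ Set.Ioo (0:ℝ) 1)
    (r : ℕ → ℝ) (h0 : r 0 ∈ Set.Ioo 0 (2 * (1 - β) / β))
    (hrec : ∀ k, r (k + 1) = r k / Real.sqrt (1 + 2 * r k * (1 - β) / β))
    (JA JB : ℝ → H → H)
    (hJA : ∀ s : ℝ, 0 < s → ∀ q : H, ∃ m ∈ A (JA s q), q = JA s q + s • m)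
    (hJB : ∀ s : ℝ, 0 < s → ∀ q : H, ∃ m ∈ B (JB s q), q = JB s q + s • m)
    (x y w : ℕ → H)
    (hx0 : x 0 = β • JA (2 * r 0 * (1 - β) / (β + r 0 * (1 - β)))
        ((β + r 0 * (1 - β))⁻¹ • w 0 + z) - β • w 0)
    (hy0 : y 0 = (r 0)⁻¹ • (w 0 - x 0))
    (hx : ∀ k, x (k + 1) = β • JA (2 * r k * (1 - β) / (β + r k * (1 - β)))
        ((β + r k * (1 - β))⁻¹ • (w k + r k • y k) + z) - β • z)
    (hy : ∀ k, y (k + 1) = (r k)⁻¹ • (w k + r k • y k - x (k + 1)))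
    (hw : ∀ k, w (k + 1) = β • JB (2 * r (k + 1) * (1 - β) / (β + r (k + 1) * (1 - β)))
        ((β + r (k + 1) * (1 - β))⁻¹ • (x (k + 1) - r (k + 1) • y (k + 1)) + z) - β • z)
    (u : H) (hu : ∃ a ∈ A u, ∃ b ∈ B u, z = u + a + b) :
    Filter.Tendsto (fun k => β⁻¹ • x k + z) Filter.atTop (nhds u) ∧
      ∃ C : ℝ, ∀ k : ℕ, 1 ≤ k → ‖β⁻¹ • x (k + 1) + z - u‖ ≤ C / k := by
  obtain ⟨hβ0, hβ1⟩ := hβ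
  have h1β : (0:ℝ) < 1 - β := by linarith
  obtain ⟨a, ha, b, hb, hz⟩ := hu
  set xs : H := β • u - β • z with hxs_def
  set as : H := ((1 - β) / β) • xs + (2 * (1 - β)) • a with has_def
  set bs : H := ((1 - β) / β) • xs + (2 * (1 - β)) • b with hbs_def
  have hxsu : β⁻¹ • xs + z = u := by
    rw [hxs_def]; match_scalars <;> field_simp <;> ring
  have haA : a ∈ A (β⁻¹ • xs + z) := by rwa [hxsu]
  have hbB : b ∈ B (β⁻¹ • xs + z) := by rwa [hxsu]
  have hab : a + b = z - u := by rw [hz]; abel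
  have habs : as + bs = 0 := by
    have h1 : as + bs = (2 * (1 - β)) • ((a + b) - (z - u)) := by
      rw [has_def, hbs_def, hxs_def]; match_scalars <;> field_simp <;> ring
    rw [h1, hab, sub_self, smul_zero]
  have hr_pos : ∀ k, 0 < r k := by
    intro k; induction k with
    | zero => exact h0.1
    | succ n ih =>
      rw [hrec n]
      have hD : (0:ℝ) < 1 + 2 * r n * (1 - β) / β := by
        have h2 : (0:ℝ) < 2 * r n * (1 - β) / β := div_pos (by nlinarith) hβ0
        linarith
      exact div_pos ih (Real.sqrt_pos.2 hD)
  have hSq : ∀ k, (r (k+1))^2 * (1 + 2 * r k * ((1 - β) / β)) = (r k)^2 := by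
    intro k
    have hD : (0:ℝ) < 1 + 2 * r k * (1 - β) / β := by
      have h2 : (0:ℝ) < 2 * r k * (1 - β) / β := div_pos (by nlinarith [hr_pos k]) hβ0
      linarith
    have he : 1 + 2 * r k * ((1 - β) / β) = 1 + 2 * r k * (1 - β) / β := by ring
    rw [he, hrec k, div_pow, Real.sq_sqrt hD.le]
    exact div_mul_cancel₀ _ hD.ne'
  set E : ℕ → H := fun k => w k + r k • y k - xs - r k • as with hE_def
  have hstep : ∀ k, ‖x (k+1) - xs‖ ≤ ‖E k‖ ∧ r k * ‖E (k+1)‖ ≤ r (k+1) * ‖E k‖ := by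
    intro k
    obtain ⟨m, hmA, hmeq⟩ := unpack A JA hJA z β (r k) hβ0 hβ1 (hr_pos k)
      (w k + r k • y k) (x (k+1)) (hx k)
    have hy1 : y (k+1) = ((1 - β) / β) • x (k+1) + (2 * (1 - β)) • m := by
      rw [hy k, hmeq]
      match_scalars <;> field_simp [(hr_pos k).ne', hβ0.ne'] <;> ring
    obtain ⟨n, hnB, hneq⟩ := unpack B JB hJB z β (r (k+1)) hβ0 hβ1 (hr_pos (k+1))
      (x (k+1) - r (k+1) • y (k+1)) (w (k+1)) (hw k)
    have hx1 : x (k+1) = w (k+1)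
        + r (k+1) • (((1 - β) / β) • w (k+1) + (2 * (1 - β)) • n)
        + r (k+1) • y (k+1) := by
      have h4 : x (k+1) = (x (k+1) - r (k+1) • y (k+1)) + r (k+1) • y (k+1) := by abel
      rw [hneq] at h4
      exact h4
    have I1 : ((1 - β) / β) * ‖x (k+1) - xs‖ ^ 2 ≤
        ⟪x (k+1) - xs, y (k+1) - as⟫ := by
      have := strong A hA.1 z β hβ0 hβ1 (x (k+1)) xs m a hmA haA
      rw [← has_def, ← hy1] at this
      exact this
    have I2 : ((1 - β) / β) * ‖w (k+1) - xs‖ ^ 2 ≤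
        ⟪w (k+1) - xs, (((1 - β) / β) • w (k+1) + (2 * (1 - β)) • n) - bs⟫ := by
      have := strong B hB.1 z β hβ0 hβ1 (w (k+1)) xs n b hnB hbB
      rw [← hbs_def] at this
      exact this
    have hR : w (k+1) - xs = (x (k+1) - xs) - r (k+1) • (y (k+1) - as)
        - r (k+1) • ((((1 - β) / β) • w (k+1) + (2 * (1 - β)) • n) - bs) := by
      have h5 : (x (k+1) - xs) - r (k+1) • (y (k+1) - as)
          - r (k+1) • ((((1 - β) / β) • w (k+1) + (2 * (1 - β)) • n) - bs)
          = w (k+1) - xs + r (k+1) • (as + bs) := by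
        rw [hx1]; module
      rw [h5, habs, smul_zero, add_zero]
    have hmeq' : w k + r k • y k = x (k+1) + r k • y (k+1) := by
      rw [hmeq, hy1]
    have hEk : E k = (x (k+1) - xs) + r k • (y (k+1) - as) := by
      show w k + r k • y k - xs - r k • as = _
      rw [hmeq']; module
    have hEk1 : E (k+1) = (w (k+1) - xs) + r (k+1) • (y (k+1) - as) := by
      show w (k+1) + r (k+1) • y (k+1) - xs - r (k+1) • as = _
      module
    have hα : (0:ℝ) < (1 - β) / β := by positivity
    have key := key_ineq ((1 - β) / β) (r k) (r (k+1)) hα (hr_pos k) (hr_pos (k+1))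
      (hSq k) (x (k+1) - xs) (y (k+1) - as) (w (k+1) - xs)
      ((((1 - β) / β) • w (k+1) + (2 * (1 - β)) • n) - bs) hR I1 I2
    rw [← hEk1, ← hEk] at key
    constructor
    · have h6 : ‖x (k+1) - xs‖ ^ 2 ≤ ‖E k‖ ^ 2 := by
        rw [hEk, norm_add_sq_real, real_inner_smul_right, norm_smul, Real.norm_eq_abs,
          abs_of_pos (hr_pos k)]
        have hpq0 : 0 ≤ ⟪x (k+1) - xs, y (k+1) - as⟫ :=
          le_trans (mul_nonneg hα.le (sq_nonneg _)) I1
        nlinarith [mul_nonneg (hr_pos k).le hpq0, sq_nonneg (r k * ‖y (k+1) - as‖)]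
      exact (pow_le_pow_iff_left₀ (norm_nonneg _) (norm_nonneg _) two_ne_zero).mp h6
    · have h7 : (r k * ‖E (k+1)‖) ^ 2 ≤ (r (k+1) * ‖E k‖) ^ 2 := by
        rw [mul_pow, mul_pow]; exact key
      exact (pow_le_pow_iff_left₀ (mul_nonneg (hr_pos k).le (norm_nonneg _))
        (mul_nonneg (hr_pos (k+1)).le (norm_nonneg _)) two_ne_zero).mp h7
  have hEbound : ∀ k, r 0 * ‖E k‖ ≤ r k * ‖E 0‖ := by
    intro k; induction k with
    | zero => exact le_refl _
    | succ n ih =>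
      have h1 := (hstep n).2
      nlinarith [mul_le_mul_of_nonneg_left ih (hr_pos (n+1)).le,
        mul_le_mul_of_nonneg_left h1 (hr_pos 0).le, hr_pos n, hr_pos 0, hr_pos (n+1),
        norm_nonneg (E (n+1)), norm_nonneg (E 0)]
  have hα : (0:ℝ) < (1 - β) / β := div_pos h1β hβ0
  set Cr : ℝ := max (r 1) (3 * β / (2 * (1 - β))) with hCr_def
  have hCr_pos : 0 < Cr := lt_of_lt_of_le (hr_pos 1) (le_max_left _ _)
  have hCr3 : 3 ≤ 2 * Cr * ((1 - β) / β) := by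
    have h1 : 3 * β / (2 * (1 - β)) ≤ Cr := le_max_right _ _
    rw [div_le_iff₀ (by positivity)] at h1
    rw [show 2 * Cr * ((1 - β) / β) = (2 * Cr * (1 - β)) / β by ring, le_div_iff₀ hβ0]
    linarith
  have hrate : ∀ k : ℕ, 1 ≤ k → r k * k ≤ Cr := by
    intro k hk
    induction k, hk using Nat.le_induction with
    | base =>
      simp only [Nat.cast_one, mul_one, hCr_def]
      exact le_max_left _ _
    | succ n hn ih =>
      have hk1 : (1:ℝ) ≤ (n:ℝ) := by exact_mod_cast hn
      have hD : (0:ℝ) < 1 + 2 * r n * ((1 - β) / β) := by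
        have := mul_pos (mul_pos two_pos (hr_pos n)) hα; linarith
      have h1 : (r n * n) * (r n * n) ≤ Cr * Cr :=
        mul_self_le_mul_self (mul_nonneg (hr_pos n).le (Nat.cast_nonneg n)) ih
      have hsq' : (r (n+1) * ((n:ℝ)+1))^2 * (1 + 2 * r n * ((1 - β) / β))
          = (r n)^2 * ((n:ℝ)+1)^2 := by
        linear_combination ((n:ℝ)+1)^2 * hSq n
      have h5 : (r n)^2 * ((n:ℝ)+1)^2 ≤ Cr^2 * (1 + 2 * r n * ((1 - β) / β)) := by
        nlinarith [h1,
          mul_nonneg (mul_nonneg (by linarith : (0:ℝ) ≤ 2 * Cr * ((1 - β) / β) - 3)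
            hCr_pos.le) (hr_pos n).le,
          mul_nonneg (by nlinarith : (0:ℝ) ≤ Cr - r n * n) (hr_pos n).le,
          mul_nonneg (by linarith : (0:ℝ) ≤ (n:ℝ) - 1) (sq_nonneg (r n))]
      have h6 : (r (n+1) * ((n:ℝ)+1))^2 ≤ Cr^2 := by
        nlinarith [h5, hsq', hD]
      have h7 : r (n+1) * ((n:ℝ)+1) ≤ Cr :=
        (pow_le_pow_iff_left₀ (mul_nonneg (hr_pos _).le (by positivity))
          hCr_pos.le two_ne_zero).mp h6
      push_cast
      convert h7 using 2
  have hK : ∀ k, ‖β⁻¹ • x (k+1) + z - u‖ ≤ (β⁻¹ * (‖E 0‖ / r 0)) * r k := by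
    intro k
    have hid : β⁻¹ • x (k+1) + z - u = β⁻¹ • (x (k+1) - xs) := by
      rw [hxs_def]; match_scalars <;> field_simp
    rw [hid, norm_smul, Real.norm_eq_abs, abs_of_pos (inv_pos.2 hβ0)]
    have h1 := (hstep k).1
    have h2 : ‖E k‖ ≤ r k * ‖E 0‖ / r 0 := by
      rw [le_div_iff₀ (hr_pos 0)]
      nlinarith [hEbound k]
    calc β⁻¹ * ‖x (k+1) - xs‖ ≤ β⁻¹ * (r k * ‖E 0‖ / r 0) :=
          mul_le_mul_of_nonneg_left (le_trans h1 h2) (by positivity)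
      _ = (β⁻¹ * (‖E 0‖ / r 0)) * r k := by ring
  have hr0 : Filter.Tendsto r Filter.atTop (nhds 0) := by
    apply squeeze_zero' (Filter.Eventually.of_forall fun k => (hr_pos k).le)
      (g := fun k : ℕ => Cr * ((k:ℝ))⁻¹)
    · filter_upwards [Filter.eventually_ge_atTop 1] with k hk
      have hkpos : (0:ℝ) < (k:ℝ) := by exact_mod_cast hk
      have := (le_div_iff₀ hkpos).2 (hrate k hk)
      simpa [div_eq_mul_inv, mul_comm] using this
    · have h1 : Filter.Tendsto (fun k : ℕ => ((k:ℝ))⁻¹) Filter.atTop (nhds 0) :=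
        tendsto_natCast_atTop_atTop.inv_tendsto_atTop
      simpa using h1.const_mul Cr
  have hshift : Filter.Tendsto (fun k => β⁻¹ • x (k+1) + z) Filter.atTop (nhds u) := by
    rw [tendsto_iff_norm_sub_tendsto_zero]
    apply squeeze_zero (fun k => norm_nonneg _) hK
    simpa using hr0.const_mul (β⁻¹ * (‖E 0‖ / r 0))
  constructor
  · exact (Filter.tendsto_add_atTop_iff_nat 1).mp hshift
  · refine ⟨β⁻¹ * (‖E 0‖ / r 0) * Cr, fun k hk => ?_⟩
    have hkpos : (0:ℝ) < (k:ℝ) := by exact_mod_cast hk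
    have hKnn : (0:ℝ) ≤ β⁻¹ * (‖E 0‖ / r 0) :=
      mul_nonneg (inv_nonneg.2 hβ0.le) (div_nonneg (norm_nonneg _) (hr_pos 0).le)
    have h2 : r k ≤ Cr / k := (le_div_iff₀ hkpos).2 (hrate k hk)
    calc ‖β⁻¹ • x (k+1) + z - u‖ ≤ (β⁻¹ * (‖E 0‖ / r 0)) * r k := hK k
      _ ≤ (β⁻¹ * (‖E 0‖ / r 0)) * (Cr / k) := mul_le_mul_of_nonneg_left h2 hKnn
      _ = β⁻¹ * (‖E 0‖ / r 0) * Cr / k := by ring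
end

section
/- Let H be a real Hilbert space, A, B maximal monotone on H, z ∈ H, β ∈ (0,1), r > 0. Define the constant-parameter iteration x_k = J_{r(A_z)^{(β)}}(z_{k-1} + r y_{k-1}), y_k = (1/r)(z_{k-1} + r y_{k-1} − x_k), z_k = J_{r(B_z)^{(β)}}(x_k − r y_k), and set u_{k+1} := z_k + r y_k. Then u_{k+1} = u_k + J_{r(B_z)^{(β)}}((2J_{r(A_z)^{(β)}} − I)(u_k)) − J_{r(A_z)^{(β)}}(u_k), i.e., the auxiliary sequence (u_k) follows a Douglas–Rachford iteration. -/
open scoped RealInnerProductSpace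

variable {H : Type*} [NormedAddCommGroup H] [InnerProductSpace ℝ H] [CompleteSpace H]

theorem stmt17 (A B : H → Set H) (hA : MaximalMonotoneOp A) (hB : MaximalMonotoneOp B)
    (z : H) (β r : ℝ) (hβ : β ∈ Set.Ioo (0:ℝ) 1) (hr : 0 < r) (JA JB : H → H)
    (hJA : ∀ q : H, ∃ m ∈ pert A z β (JA q), q = JA q + r • m)
    (hJB : ∀ q : H, ∃ m ∈ pert B z β (JB q), q = JB q + r • m)
    (x y w u : ℕ → H)
    (hx : ∀ k, x (k + 1) = JA (w k + r • y k))
    (hy : ∀ k, y (k + 1) = r⁻¹ • (w k + r • y k - x (k + 1)))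
    (hw : ∀ k, w (k + 1) = JB (x (k + 1) - r • y (k + 1)))
    (hu : ∀ k, u k = w k + r • y k) :
    ∀ k, u (k + 1) = u k + JB ((2:ℝ) • JA (u k) - u k) - JA (u k) := by
  intro k
  have hr' : r ≠ 0 := hr.ne'
  have hxk : x (k + 1) = JA (u k) := by rw [hx, hu]
  have hry : r • y (k + 1) = u k - x (k + 1) := by
    rw [hy, smul_smul, mul_inv_cancel₀ hr', one_smul, hu]
  have harg : JA (u k) - (u k - JA (u k)) = (2:ℝ) • JA (u k) - u k := by
    rw [two_smul]; abel
  rw [hu (k + 1), hw, hry, hxk, harg]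
  abel
end

section
/- Let C, D be nonempty closed convex subsets of a real Hilbert space H with C ∩ D ≠ ∅, and z ∈ H. If z − P_{C∩D}(z) ∈ N_C(P_{C∩D}(z)) + N_D(P_{C∩D}(z)), then J_{N_C + N_D}(z) exists and equals P_{C∩D}(z), i.e., P_{C∩D}(z) is the unique point u with z ∈ u + N_C(u) + N_D(u). -/
attribute [local instance] Classical.propDecidable

open scoped RealInnerProductSpace

variable {H : Type*} [NormedAddCommGroup H] [InnerProductSpace ℝ H] [CompleteSpace H]

/-- The normal cone of a set `C` at a point `x`. -/
def Ncone (C : Set H) (x : H) : Set H :=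
  if x ∈ C then {u : H | ∀ y ∈ C, ⟪u, y - x⟫ ≤ 0} else ∅

lemma Ncone_mem {C : Set H} {x a : H} (ha : a ∈ Ncone C x) :
    x ∈ C ∧ ∀ y ∈ C, ⟪a, y - x⟫ ≤ 0 := by
  by_cases hx : x ∈ C
  · refine ⟨hx, ?_⟩
    simpa [Ncone, hx] using ha
  · simp [Ncone, hx] at ha

theorem stmt19 (C D : Set H) (hCne : C.Nonempty) (hCcl : IsClosed C) (hCcv : Convex ℝ C)
    (hDne : D.Nonempty) (hDcl : IsClosed D) (hDcv : Convex ℝ D)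
    (hCD : (C ∩ D).Nonempty) (z P : H)
    (hP : P ∈ C ∩ D ∧ ∀ w ∈ C ∩ D, ‖z - P‖ ≤ ‖z - w‖)
    (h : ∃ a ∈ Ncone C P, ∃ b ∈ Ncone D P, z - P = a + b) :
    (∃ a ∈ Ncone C P, ∃ b ∈ Ncone D P, z = P + a + b) ∧
      ∀ u : H, (∃ a ∈ Ncone C u, ∃ b ∈ Ncone D u, z = u + a + b) → u = P := by
  obtain ⟨a', ha', b', hb', hab'⟩ := h
  constructor
  · exact ⟨a', ha', b', hb', by rw [add_assoc, ← hab']; abel⟩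
  · rintro u ⟨a, ha, b, hb, hab⟩
    obtain ⟨huC, haP⟩ := Ncone_mem ha
    obtain ⟨huD, hbP⟩ := Ncone_mem hb
    obtain ⟨_, ha'P⟩ := Ncone_mem ha'
    obtain ⟨_, hb'P⟩ := Ncone_mem hb'
    have h1 : ⟪a, P - u⟫ ≤ 0 := haP P hP.1.1
    have h2 : ⟪b, P - u⟫ ≤ 0 := hbP P hP.1.2
    have h3 : ⟪a', u - P⟫ ≤ 0 := ha'P u huC
    have h4 : ⟪b', u - P⟫ ≤ 0 := hb'P u huD
    have key : (0:ℝ) ≤ ⟪(a + b) - (a' + b'), u - P⟫ := by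
      rw [inner_sub_left, inner_add_left, inner_add_left]
      have h1' : (0:ℝ) ≤ ⟪a, u - P⟫ := by
        have := h1; rw [show P - u = -(u - P) by abel, inner_neg_right] at this; linarith
      have h2' : (0:ℝ) ≤ ⟪b, u - P⟫ := by
        have := h2; rw [show P - u = -(u - P) by abel, inner_neg_right] at this; linarith
      linarith
    have heq : (a + b) - (a' + b') = P - u := by
      have : a + b = z - u := by rw [hab]; abel
      rw [this, ← hab']; abel
    rw [heq] at key
    have : ⟪P - u, u - P⟫ = -(‖u - P‖^2) := by
      rw [show P - u = -(u - P) by abel, inner_neg_left, real_inner_self_eq_norm_sq]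
    rw [this] at key
    have : ‖u - P‖ = 0 := by nlinarith [norm_nonneg (u - P)]
    have := norm_sub_eq_zero_iff.mp this
    exact this
end
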